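/- arXiv:2207.02551 — 2 statements merged into one kernel-verified Lean document; each statement's English description precedes it below -/
import Mathlib

section
/- Let m≥4, q even, π a permutation of {0,…,m−3}, and g=Σ_{α=0}^{m−4} x_{π(α)}x_{π(α+1)}. Define p=Ψ((q/2)g), q̃=Ψ((q/2)(g+x_{π(0)}+x_{π(m−3)}+c₁)), u=Ψ((q/2)(g+x_{π(m−3)})), v=Ψ((q/2)(g+x_{π(0)}+c₁)) for any c₁∈Z_q, all of length 2^{m−2}. Then C(p,q̃)(τ)+C(u,v)(τ)=0 for all shifts τ with 2^{m−2}−2^{π(m−3)} ≤ τ ≤ 2^{m−2}−1. -/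
open Finset Complex

/-- ω = exp(2πi/q). -/
noncomputable def omegaq (q : ℕ) : ℂ := Complex.exp (2 * Real.pi * Complex.I / q)

/-- Aperiodic cross-correlation of two length-`N` complex sequences at shift `τ`. -/
noncomputable def acorr (N : ℕ) (x y : ℕ → ℂ) (τ : ℕ) : ℂ :=
  ∑ i ∈ Finset.range (N - τ), x i * (starRingEnd ℂ) (y (i + τ))

/-- `k`-th binary digit of `i`. -/
def bit (i k : ℕ) : ℕ := (i / 2 ^ k) % 2

lemma omegaq_half (q : ℕ) (hq : 2 ≤ q) (hq2 : 2 ∣ q) : omegaq q ^ (q / 2) = -1 := by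
  obtain ⟨k, rfl⟩ := hq2
  have hk : k ≠ 0 := by omega
  have hk' : (k : ℂ) ≠ 0 := Nat.cast_ne_zero.mpr hk
  rw [omegaq, ← Complex.exp_nat_mul]
  have : (↑(2 * k / 2) : ℂ) * (2 * ↑Real.pi * Complex.I / ↑(2 * k)) =
      ↑Real.pi * Complex.I := by
    rw [Nat.mul_div_cancel_left k (by norm_num)]
    push_cast
    field_simp
  rw [this, Complex.exp_pi_mul_I]

/-- cross-correlation property of Lemma 3. -/
theorem stmt_3 (q m c₁ : ℕ) (hq : 2 ≤ q) (hq2 : 2 ∣ q) (hm : 4 ≤ m)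
    (π : ℕ → ℕ) (hπ : Set.BijOn π (Set.Iio (m - 2)) (Set.Iio (m - 2)))
    (g : ℕ → ℕ)
    (hg : ∀ i, g i = ∑ k ∈ Finset.range (m - 3), bit i (π k) * bit i (π (k + 1)))
    (p qs u v : ℕ → ℂ)
    (hp : ∀ i, p i = omegaq q ^ (q / 2 * g i))
    (hqs : ∀ i, qs i = omegaq q ^ (q / 2 * (g i + bit i (π 0) + bit i (π (m - 3)) + c₁)))
    (hu : ∀ i, u i = omegaq q ^ (q / 2 * (g i + bit i (π (m - 3)))))
    (hv : ∀ i, v i = omegaq q ^ (q / 2 * (g i + bit i (π 0) + c₁))) :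
    ∀ τ : ℕ, 2 ^ (m - 2) - 2 ^ π (m - 3) ≤ τ → τ ≤ 2 ^ (m - 2) - 1 →
      acorr (2 ^ (m - 2)) p qs τ + acorr (2 ^ (m - 2)) u v τ = 0 := by
  intro τ hτ1 hτ2
  set s := π (m - 3) with hs_def
  have hω : omegaq q ^ (q / 2) = -1 := omegaq_half q hq hq2
  have hs : s < m - 2 := hπ.mapsTo (show m - 3 ∈ Set.Iio (m - 2) by
    simp only [Set.mem_Iio]; omega)
  have hpow : (2:ℕ) ^ (m - 2 - s) * 2 ^ s = 2 ^ (m - 2) := by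
    rw [← pow_add]; congr 1; omega
  have h2s : (1:ℕ) ≤ 2 ^ s := Nat.one_le_two_pow
  have h2ms : (2:ℕ) ≤ 2 ^ (m - 2 - s) := by
    calc (2:ℕ) = 2 ^ 1 := rfl
    _ ≤ 2 ^ (m - 2 - s) := Nat.pow_le_pow_right (by norm_num) (by omega)
  rw [acorr, acorr, ← Finset.sum_add_distrib]
  apply Finset.sum_eq_zero
  intro i hi
  rw [Finset.mem_range] at hi
  -- bit i s = 0
  have hbi : bit i s = 0 := by
    have : i < 2 ^ s := by omega
    rw [bit, Nat.div_eq_of_lt this]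
  -- bit (i+τ) s = 1
  have hbj : bit (i + τ) s = 1 := by
    have hlt : i + τ < 2 ^ (m - 2) := by omega
    have hge : 2 ^ (m - 2) - 2 ^ s ≤ i + τ := by omega
    have hdiv : (i + τ) / 2 ^ s = 2 ^ (m - 2 - s) - 1 := by
      have hub : (i + τ) / 2 ^ s < 2 ^ (m - 2 - s) := by
        rw [Nat.div_lt_iff_lt_mul (Nat.pos_of_ne_zero (by positivity))]
        omega
      have hlb : 2 ^ (m - 2 - s) - 1 ≤ (i + τ) / 2 ^ s := by
        rw [Nat.le_div_iff_mul_le (Nat.pos_of_ne_zero (by positivity))]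
        have : (2 ^ (m - 2 - s) - 1) * 2 ^ s = 2 ^ (m - 2) - 2 ^ s := by
          rw [Nat.sub_mul, one_mul, hpow]
        omega
      omega
    rw [bit, hdiv]
    have : 2 ^ (m - 2 - s) = 2 * 2 ^ (m - 2 - s - 1) := by
      rw [← pow_succ']; congr 1; omega
    omega
  rw [hp, hqs, hu, hv, pow_mul, pow_mul, pow_mul, pow_mul, hω, hbi, hbj]
  rw [map_pow, map_pow]
  simp only [map_neg, map_one, add_zero]
  have key : g (i + τ) + bit (i + τ) (π 0) + 1 + c₁ =
      (g (i + τ) + bit (i + τ) (π 0) + c₁) + 1 := by ring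
  rw [key, pow_succ]
  ring
end

section
/- Let m≥4, q even, π a permutation of {0,…,m−3}, g=Σ_{α=0}^{m−4}x_{π(α)}x_{π(α+1)}, and G=(q/2)(x̄_{m−1}x_{m−2}·g + x_{m−1}x̄_{m−2}·(g+x_{π(0)}+m−2))+c with x̄=1−x. Set G₁=G+(q/2)x_{m−1}x_{m−2} and G₂=G+(q/2)x_{π(m−3)}(x_{m−1}+x_{m−2}). Then the pair (Ψ_{2^{m−2}−1}(G₁), Ψ_{2^{m−2}−1}(G₂)) of length-(2^{m−1}+2) sequences is a (2^{m−1}+2, 2^{π(m−3)}+1)-CZCP. -/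
open Finset Complex

lemma bit_le_one (i k : ℕ) : bit i k ≤ 1 := Nat.lt_succ_iff.mp (Nat.mod_lt _ (by norm_num))

lemma bit_zero (t : ℕ) : bit 0 t = 0 := by simp [bit]

lemma bit_of_lt {i k : ℕ} (h : i < 2^k) : bit i k = 0 := by
  unfold bit; rw [Nat.div_eq_of_lt h]

lemma bit_mul_add (c k : ℕ) {s t : ℕ} (h : t < s) : bit (c * 2^s + k) t = bit k t := by
  have hs : 2^s = 2^(s-t-1) * 2 * 2^t := by
    rw [← pow_succ, ← pow_add]; congr 1; omega
  unfold bit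
  rw [hs, show c * (2^(s-t-1) * 2 * 2^t) + k = k + (c * 2^(s-t-1) * 2) * 2^t by ring,
      Nat.add_mul_div_right _ _ (pow_pos two_pos t),
      show k / 2^t + c * 2^(s-t-1) * 2 = k / 2^t + (c * 2^(s-t-1)) * 2 by ring,
      Nat.add_mul_mod_self_right]

lemma bit_parts_eq (A b r t : ℕ) (hb : b ≤ 1) (hr : r < 2^t) :
    bit (A * 2^(t+1) + b * 2^t + r) t = b := by
  have h1 : A * 2^(t+1) + b * 2^t + r = r + (A*2 + b) * 2^t := by rw [pow_succ]; ring
  unfold bit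
  rw [h1, Nat.add_mul_div_right _ _ (pow_pos two_pos t), Nat.div_eq_of_lt hr]
  omega

lemma bit_parts_hi (A r t u : ℕ) (hr : r < 2^(t+1)) (hu : t < u) :
    bit (A * 2^(t+1) + r) u = bit A (u - (t+1)) := by
  have h2 : (A * 2^(t+1) + r) / 2^(t+1) = A := by
    rw [add_comm, Nat.add_mul_div_right _ _ (pow_pos two_pos _), Nat.div_eq_of_lt hr, zero_add]
  unfold bit
  rw [show 2^u = 2^(t+1) * 2^(u-(t+1)) by rw [← pow_add]; congr 1; omega,
      ← Nat.div_div_eq_div_mul, h2]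

lemma bit_decomp (k β : ℕ) : (k / 2^(β+1)) * 2^(β+1) + (bit k β) * 2^β + k % 2^β = k := by
  have h3 : k / 2^β / 2 = k / 2^(β+1) := by rw [Nat.div_div_eq_div_mul, pow_succ]
  unfold bit
  have h4 : k / 2^β / 2 * 2 + k / 2^β % 2 = k / 2^β := by omega
  calc (k / 2^(β+1)) * 2^(β+1) + (k / 2^β % 2) * 2^β + k % 2^β
      = ((k / 2^β / 2) * 2 + k / 2^β % 2) * 2^β + k % 2^β := by rw [← h3, pow_succ]; ring
    _ = (k / 2^β) * 2^β + k % 2^β := by rw [h4]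
    _ = k := by rw [mul_comm]; exact Nat.div_add_mod k (2^β)

/-- Flip bit `β` of `k`. -/
def flipb (β k : ℕ) : ℕ := (k / 2^(β+1)) * 2^(β+1) + (1 - bit k β) * 2^β + k % 2^β

lemma flipb_bit_self (β k : ℕ) : bit (flipb β k) β = 1 - bit k β :=
  bit_parts_eq _ _ _ _ (by omega) (Nat.mod_lt _ (pow_pos two_pos β))

lemma flipb_alt (β k : ℕ) : flipb β k = ((k / 2^(β+1)) * 2 + (1 - bit k β)) * 2^β + k % 2^β := by
  unfold flipb; rw [pow_succ]; ring

lemma flipb_bit_lt {β t : ℕ} (k : ℕ) (ht : t < β) : bit (flipb β k) t = bit k t := by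
  rw [flipb_alt, bit_mul_add _ _ ht]
  conv_rhs => rw [show k = (k / 2^β) * 2^β + k % 2^β by rw [mul_comm]; exact (Nat.div_add_mod k (2^β)).symm]
  rw [bit_mul_add _ _ ht]

lemma flipb_inner_lt (β k : ℕ) : (1 - bit k β) * 2^β + k % 2^β < 2^(β+1) := by
  have h6 : (1 - bit k β) * 2^β ≤ 1 * 2^β := Nat.mul_le_mul_right _ (by omega)
  have hm : k % 2^β < 2^β := Nat.mod_lt _ (pow_pos two_pos β)
  rw [pow_succ]; omega

lemma flipb_bit_gt {β t : ℕ} (k : ℕ) (ht : β < t) : bit (flipb β k) t = bit k t := by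
  have hb := bit_le_one k β
  have hm : k % 2^β < 2^β := Nat.mod_lt _ (pow_pos two_pos β)
  have h1 : bit (flipb β k) t = bit (k / 2^(β+1)) (t - (β+1)) := by
    unfold flipb
    rw [add_assoc, bit_parts_hi _ _ _ _ (flipb_inner_lt β k) ht]
  have hin2 : bit k β * 2^β + k % 2^β < 2^(β+1) := by
    have h6 : bit k β * 2^β ≤ 1 * 2^β := Nat.mul_le_mul_right _ hb
    rw [pow_succ]; omega
  have h2 : bit k t = bit (k / 2^(β+1)) (t - (β+1)) := by
    conv_lhs => rw [← bit_decomp k β]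
    rw [add_assoc, bit_parts_hi _ _ _ _ hin2 ht]
  rw [h1, h2]

lemma flipb_bit_ne {β t : ℕ} (k : ℕ) (ht : t ≠ β) : bit (flipb β k) t = bit k t := by
  rcases lt_or_gt_of_ne ht with h | h
  · exact flipb_bit_lt k h
  · exact flipb_bit_gt k h

lemma flipb_lt {β s k : ℕ} (hk : k < 2^s) (hβ : β < s) : flipb β k < 2^s := by
  have hQ : 0 < 2^(β+1) := pow_pos two_pos _
  have h2 : k / 2^(β+1) < 2^(s-(β+1)) := by
    rw [Nat.div_lt_iff_lt_mul hQ, ← pow_add, show s - (β+1) + (β+1) = s by omega]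
    exact hk
  have h3 : (k / 2^(β+1) + 1) * 2^(β+1) ≤ 2^s := by
    calc (k / 2^(β+1) + 1) * 2^(β+1) ≤ 2^(s-(β+1)) * 2^(β+1) := Nat.mul_le_mul_right _ (by omega)
      _ = 2^s := by rw [← pow_add]; congr 1; omega
  have h7 : flipb β k < (k / 2^(β+1) + 1) * 2^(β+1) := by
    unfold flipb
    rw [show (k / 2^(β+1) + 1) * 2^(β+1) = k / 2^(β+1) * 2^(β+1) + 2^(β+1) by ring, add_assoc]
    exact Nat.add_lt_add_left (flipb_inner_lt β k) _
  omega

lemma flipb_flipb (β k : ℕ) : flipb β (flipb β k) = k := by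
  have hb := bit_le_one k β
  have hm : k % 2^β < 2^β := Nat.mod_lt _ (pow_pos two_pos β)
  have h1 : flipb β k / 2^(β+1) = k / 2^(β+1) := by
    unfold flipb
    rw [add_assoc, add_comm, Nat.add_mul_div_right _ _ (pow_pos two_pos _),
        Nat.div_eq_of_lt (flipb_inner_lt β k), zero_add]
  have h2 : flipb β k % 2^β = k % 2^β := by
    rw [flipb_alt, add_comm, Nat.add_mul_mod_self_right, Nat.mod_eq_of_lt hm]
  have h3 := flipb_bit_self β k
  calc flipb β (flipb β k)
      = (flipb β k / 2^(β+1)) * 2^(β+1) + (1 - bit (flipb β k) β) * 2^β + (flipb β k) % 2^β := rfl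
    _ = (k / 2^(β+1)) * 2^(β+1) + (bit k β) * 2^β + k % 2^β := by
        rw [h1, h2, h3, show 1 - (1 - bit k β) = bit k β by omega]
    _ = k := bit_decomp k β

lemma flipb_add {β k ℓ τ : ℕ} (hkl : ℓ = k + τ) (hbit : bit k β = bit ℓ β) :
    flipb β ℓ = flipb β k + τ := by
  have hb := bit_le_one k β
  have hup : ∀ x : ℕ, bit x β = 0 → flipb β x = x + 2^β := by
    intro x hx
    conv_rhs => rw [← bit_decomp x β]
    unfold flipb
    rw [hx]; ring
  have hdown : ∀ x : ℕ, bit x β = 1 → x = flipb β x + 2^β := by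
    intro x hx
    conv_lhs => rw [← bit_decomp x β]
    unfold flipb
    rw [hx]; ring
  rcases (by omega : bit k β = 0 ∨ bit k β = 1) with h | h
  · rw [hup k h, hup ℓ (by rw [← hbit]; exact h)]; omega
  · have h2 := hdown k h
    have h3 := hdown ℓ (by rw [← hbit]; exact h)
    omega

lemma bit_two_pow (p t : ℕ) : bit (2^p) t = if p = t then 1 else 0 := by
  rcases lt_trichotomy t p with h | h | h
  · rw [if_neg (by omega)]
    unfold bit
    rw [Nat.pow_div (by omega) (by norm_num),
        show 2^(p-t) = 2^(p-t-1)*2 by rw [← pow_succ]; congr 1; omega]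
    simp [Nat.mul_mod_left]
  · subst h
    rw [if_pos rfl]
    unfold bit
    rw [Nat.div_self (pow_pos two_pos t)]
  · rw [if_neg (by omega)]
    exact bit_of_lt (Nat.pow_lt_pow_right (by norm_num) h)

lemma bit_mirror {s k t : ℕ} (hk : k < 2^s) (ht : t < s) :
    bit (2^s - 1 - k) t = 1 - bit k t := by
  set A := k / 2^(t+1) with hA
  set b := bit k t with hb
  set r := k % 2^t with hr
  have hdec : A * 2^(t+1) + b * 2^t + r = k := bit_decomp k t
  have hble : b ≤ 1 := bit_le_one k t
  have hrlt : r < 2^t := Nat.mod_lt _ (pow_pos two_pos t)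
  have htpos : 0 < 2^t := pow_pos two_pos t
  have hAlt : A < 2^(s-(t+1)) := by
    rw [hA, Nat.div_lt_iff_lt_mul (pow_pos two_pos _), ← pow_add,
        show s - (t+1) + (t+1) = s by omega]
    exact hk
  set Q := 2^(t+1) with hQ
  set C := 2^(s-(t+1)) - 1 - A with hC
  have hQ2 : Q = 2^t + 2^t := by rw [hQ, pow_succ]; omega
  have hCA : C + A + 1 = 2^(s-(t+1)) := by omega
  have hCQ : C * Q + A * Q + Q = 2^s := by
    have h4 : C*Q + A*Q + Q = 2^(s-(t+1)) * Q := by rw [← hCA]; ring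
    rw [h4, hQ, ← pow_add]
    congr 1; omega
  have h5 : (1-b)*2^t + b*2^t = 2^t := by
    have h6 : (1-b) + b = 1 := by omega
    calc (1-b)*2^t + b*2^t = ((1-b)+b)*2^t := by ring
      _ = 2^t := by rw [h6]; ring
  have key : 2^s - 1 - k = C * Q + (1-b)*2^t + (2^t - 1 - r) := by omega
  rw [key, bit_parts_eq _ _ _ _ (by omega) (by omega)]

lemma bit_eq_testBit (i k : ℕ) : bit i k = if i.testBit k then 1 else 0 := by
  rw [Nat.testBit_eq_decide_div_mod_eq]
  unfold bit
  rcases Nat.mod_two_eq_zero_or_one (i / 2^k) with h | h <;> simp [h]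

lemma exists_bit_ne {s k ℓ : ℕ} (hk : k < 2^s) (hl : ℓ < 2^s) (hne : k ≠ ℓ) :
    ∃ t, t < s ∧ bit k t ≠ bit ℓ t := by
  by_contra h
  push_neg at h
  apply hne
  apply Nat.eq_of_testBit_eq
  intro t
  by_cases ht : t < s
  · have h2 := h t ht
    rw [bit_eq_testBit, bit_eq_testBit] at h2
    cases hk1 : k.testBit t <;> cases hl1 : ℓ.testBit t <;> simp_all
  · have h1 : k.testBit t = false :=
      Nat.testBit_eq_false_of_lt (lt_of_lt_of_le hk (Nat.pow_le_pow_right (by norm_num) (by omega)))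
    have h2 : ℓ.testBit t = false :=
      Nat.testBit_eq_false_of_lt (lt_of_lt_of_le hl (Nat.pow_le_pow_right (by norm_num) (by omega)))
    rw [h1, h2]

lemma npow_mod (x : ℕ) : (-1:ℂ)^x = (-1:ℂ)^(x % 2) := by
  conv_lhs => rw [← Nat.div_add_mod x 2]
  rw [pow_add, pow_mul]
  norm_num

lemma npc' {x y : ℕ} (h : x % 2 = y % 2) : (-1:ℂ)^x = (-1:ℂ)^y := by
  rw [npow_mod x, npow_mod y, h]

lemma npc_neg {x y : ℕ} (h : x % 2 ≠ y % 2) : (-1:ℂ)^x = -(-1:ℂ)^y := by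
  rw [npow_mod x, npow_mod y]
  rcases (by omega : x % 2 = 0 ∧ y % 2 = 1 ∨ x % 2 = 1 ∧ y % 2 = 0) with ⟨h1,h2⟩ | ⟨h1,h2⟩ <;>
    rw [h1, h2] <;> norm_num

lemma npc_cancel {x y : ℕ} (h : x % 2 ≠ y % 2) : (-1:ℂ)^x + (-1:ℂ)^y = 0 := by
  rw [npc_neg h]; ring

lemma npc_one {x : ℕ} (h : x % 2 = 1) : (-1:ℂ)^x = -1 := by
  rw [npow_mod x, h, pow_one]

lemma npc_zero {x : ℕ} (h : x % 2 = 0) : (-1:ℂ)^x = 1 := by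
  rw [npow_mod x, h, pow_zero]

lemma tele (f : ℕ → ZMod 2) (M : ℕ) :
    ∑ r ∈ Finset.range M, (f r + f (r+1)) = f 0 + f M := by
  have hh : ∀ u : ZMod 2, u + u = 0 := by decide
  induction M with
  | zero => simp; exact (hh (f 0)).symm
  | succ M ih =>
    rw [Finset.sum_range_succ, ih]
    have h2 : ∀ u v w : ZMod 2, (u + v) + (v + w) = u + w := by decide
    exact h2 _ _ _

lemma sum_range_add' {γ : Type*} [AddCommMonoid γ] (f : ℕ → γ) (a b : ℕ) :
    ∑ i ∈ Finset.range (a+b), f i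
      = (∑ i ∈ Finset.range a, f i) + ∑ i ∈ Finset.range b, f (a+i) := by
  induction b with
  | zero => simp
  | succ b ih =>
    rw [show a + (b+1) = (a+b)+1 from rfl, Finset.sum_range_succ, ih, Finset.sum_range_succ,
        add_assoc]

lemma find_eq {p q : ℕ → Prop} [DecidablePred p] [DecidablePred q]
    (hp : ∃ n, p n) (hq : ∃ n, q n) (h : ∀ n, p n ↔ q n) : Nat.find hp = Nat.find hq :=
  le_antisymm (Nat.find_min' hp ((h _).mpr (Nat.find_spec hq)))
    (Nat.find_min' hq ((h _).mp (Nat.find_spec hp)))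

lemma gz_sum (M : ℕ) (π : ℕ → ℕ) (g : ℕ → ℕ)
    (hg : ∀ i, g i = ∑ k ∈ Finset.range (M+1), bit i (π k) * bit i (π (k+1))) (x : ℕ) :
    (g x : ZMod 2) = ∑ r ∈ Finset.range (M+1), (bit x (π r) : ZMod 2) * (bit x (π (r+1)) : ZMod 2) := by
  rw [hg x]; push_cast; ring

lemma gz_flip (M : ℕ) (π : ℕ → ℕ) (g : ℕ → ℕ)
    (hinj : ∀ r, r < M+2 → ∀ r', r' < M+2 → π r = π r' → r = r')
    (hg : ∀ i, g i = ∑ k ∈ Finset.range (M+1), bit i (π k) * bit i (π (k+1)))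
    (k ℓ A : ℕ) (hA : A + 1 < M + 2)
    (hdiff : bit k (π (A+1)) ≠ bit ℓ (π (A+1)))
    (heq : ∀ j, j ≤ A → bit k (π j) = bit ℓ (π j)) :
    (g (flipb (π A) k) + g (flipb (π A) ℓ) + g k + g ℓ) % 2 = 1 := by
  set β := π A with hβ
  have hne1 : π (A+1) ≠ β := fun hc => by
    have := hinj (A+1) (by omega) A (by omega) (by rw [← hβ]; exact hc)
    omega
  have hcast : ∀ x : ℕ, ((bit (flipb β x) β : ZMod 2)) = 1 + (bit x β : ZMod 2) := by
    intro x
    have h1 := flipb_bit_self β x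
    have h2 := bit_le_one x β
    rcases (by omega : bit x β = 0 ∨ bit x β = 1) with h | h <;> rw [h] at h1 <;> rw [h1, h] <;> decide
  have main : ((g (flipb β k) + g (flipb β ℓ) + g k + g ℓ : ℕ) : ZMod 2) = ((1:ℕ) : ZMod 2) := by
    push_cast
    rw [gz_sum M π g hg, gz_sum M π g hg, gz_sum M π g hg, gz_sum M π g hg,
        ← Finset.sum_add_distrib, ← Finset.sum_add_distrib, ← Finset.sum_add_distrib]
    have hterm : ∀ r ∈ Finset.range (M+1),
        ((bit (flipb β k) (π r) : ZMod 2) * (bit (flipb β k) (π (r+1)) : ZMod 2)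
          + (bit (flipb β ℓ) (π r) : ZMod 2) * (bit (flipb β ℓ) (π (r+1)) : ZMod 2)
          + (bit k (π r) : ZMod 2) * (bit k (π (r+1)) : ZMod 2)
          + (bit ℓ (π r) : ZMod 2) * (bit ℓ (π (r+1)) : ZMod 2))
        = if r = A then 1 else 0 := by
      intro r hr
      rw [Finset.mem_range] at hr
      by_cases hrA : r = A
      · subst hrA
        rw [if_pos rfl, flipb_bit_ne k hne1, flipb_bit_ne ℓ hne1, show π r = β from hβ.symm,
            hcast k, hcast ℓ]
        have hs : (bit k β : ZMod 2) = (bit ℓ β : ZMod 2) := by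
          rw [hβ]; exact congrArg _ (heq r le_rfl)
        have hbk := bit_le_one k (π (r+1))
        have hbl := bit_le_one ℓ (π (r+1))
        have hv : (bit k (π (r+1)) : ZMod 2) + (bit ℓ (π (r+1)) : ZMod 2) = 1 := by
          rcases (by omega : bit k (π (r+1)) = 0 ∧ bit ℓ (π (r+1)) = 1
              ∨ bit k (π (r+1)) = 1 ∧ bit ℓ (π (r+1)) = 0) with ⟨h1,h2⟩ | ⟨h1,h2⟩ <;>
            rw [h1, h2] <;> decide
        have key : ∀ s u v : ZMod 2, u + v = 1 → (1+s)*u + (1+s)*v + s*u + s*v = 1 := by decide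
        rw [hs]
        exact key _ _ _ hv
      · rw [if_neg hrA]
        have hπr : π r ≠ β := fun hc => hrA (hinj r (by omega) A (by omega) (by rw [← hβ]; exact hc))
        by_cases hr1 : r + 1 = A
        · rw [flipb_bit_ne k hπr, flipb_bit_ne ℓ hπr,
              show π (r+1) = β by rw [hr1], hcast k, hcast ℓ]
          have hu : (bit k (π r) : ZMod 2) = (bit ℓ (π r) : ZMod 2) := congrArg _ (heq r (by omega))
          have hs : (bit k β : ZMod 2) = (bit ℓ β : ZMod 2) := by
            rw [hβ]; exact congrArg _ (heq A le_rfl)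
          rw [hu, hs]
          have key2 : ∀ u s : ZMod 2, u*(1+s) + u*(1+s) + u*s + u*s = 0 := by decide
          exact key2 _ _
        · have hπr1 : π (r+1) ≠ β := fun hc =>
            hr1 (hinj (r+1) (by omega) A (by omega) (by rw [← hβ]; exact hc))
          rw [flipb_bit_ne k hπr, flipb_bit_ne ℓ hπr, flipb_bit_ne k hπr1, flipb_bit_ne ℓ hπr1]
          have key3 : ∀ a b c d : ZMod 2, a*b + c*d + a*b + c*d = 0 := by decide
          exact key3 _ _ _ _
    rw [Finset.sum_congr rfl hterm, Finset.sum_ite_eq' (Finset.range (M+1)) A fun _ => (1:ZMod 2),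
        if_pos (Finset.mem_range.mpr (by omega))]
  have h2 := (ZMod.natCast_eq_natCast_iff' _ _ 2).mp main
  omega

lemma gz_mirror' (M : ℕ) (π : ℕ → ℕ) (g : ℕ → ℕ)
    (hlt : ∀ r, r < M+2 → π r < M+2)
    (hg : ∀ i, g i = ∑ k ∈ Finset.range (M+1), bit i (π k) * bit i (π (k+1)))
    (w : ℕ) (hw : w < 2^(M+2)) :
    g (2^(M+2) - 1 - w) % 2 = (M + 1 + g w + bit w (π 0) + bit w (π (M+1))) % 2 := by
  have hbm : ∀ t, t < M+2 → ((bit (2^(M+2)-1-w) t : ZMod 2)) = 1 + (bit w t : ZMod 2) := by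
    intro t ht
    rw [bit_mirror hw ht]
    have h2 := bit_le_one w t
    rcases (by omega : bit w t = 0 ∨ bit w t = 1) with h | h <;> rw [h] <;> decide
  have main : ((g (2^(M+2) - 1 - w) : ℕ) : ZMod 2)
      = ((M + 1 + g w + bit w (π 0) + bit w (π (M+1)) : ℕ) : ZMod 2) := by
    rw [gz_sum M π g hg]
    push_cast
    rw [gz_sum M π g hg]
    have hterm : ∀ r ∈ Finset.range (M+1),
        (bit (2^(M+2)-1-w) (π r) : ZMod 2) * (bit (2^(M+2)-1-w) (π (r+1)) : ZMod 2)
          = ((bit w (π r) : ZMod 2) + (bit w (π (r+1)) : ZMod 2))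
            + (1 + (bit w (π r) : ZMod 2) * (bit w (π (r+1)) : ZMod 2)) := by
      intro r hr
      rw [Finset.mem_range] at hr
      rw [hbm _ (hlt r (by omega)), hbm _ (hlt (r+1) (by omega))]
      ring
    have tele' := tele (fun j => (bit w (π j) : ZMod 2)) (M+1)
    rw [Finset.sum_congr rfl hterm, Finset.sum_add_distrib, tele', Finset.sum_add_distrib,
        Finset.sum_const, Finset.card_range, nsmul_eq_mul, mul_one]
    push_cast
    ring
  have h2 := (ZMod.natCast_eq_natCast_iff' _ _ 2).mp main
  omega
/-- Lemma 2: (Ψ_{2^{m−2}−1}(G₁), Ψ_{2^{m−2}−1}(G₂)) is a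
(2^{m−1}+2, 2^{π(m−3)}+1)-CZCP. -/
theorem stmt_5 (q m c : ℕ) (hq : 2 ≤ q) (hq2 : 2 ∣ q) (hm : 4 ≤ m)
    (π : ℕ → ℕ) (hπ : Set.BijOn π (Set.Iio (m - 2)) (Set.Iio (m - 2)))
    (g G G₁ G₂ : ℕ → ℕ)
    (hg : ∀ i, g i = ∑ k ∈ Finset.range (m - 3), bit i (π k) * bit i (π (k + 1)))
    (hG : ∀ i, G i = q / 2 * ((1 - bit i (m - 1)) * bit i (m - 2) * g i
        + bit i (m - 1) * (1 - bit i (m - 2)) * (g i + bit i (π 0) + (m - 2))) + c)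
    (hG₁ : ∀ i, G₁ i = G i + q / 2 * (bit i (m - 1) * bit i (m - 2)))
    (hG₂ : ∀ i, G₂ i = G i + q / 2 * (bit i (π (m - 3)) * (bit i (m - 1) + bit i (m - 2))))
    (a b : ℕ → ℂ)
    (ha : ∀ i, a i = omegaq q ^ G₁ (i + (2 ^ (m - 2) - 1)))
    (hb : ∀ i, b i = omegaq q ^ G₂ (i + (2 ^ (m - 2) - 1))) :
    (∀ τ : ℕ, (1 ≤ τ ∧ τ ≤ 2 ^ π (m - 3) + 1) ∨
        (2 ^ (m - 1) + 2 - (2 ^ π (m - 3) + 1) ≤ τ ∧ τ ≤ 2 ^ (m - 1) + 1) →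
      acorr (2 ^ (m - 1) + 2) a a τ + acorr (2 ^ (m - 1) + 2) b b τ = 0) ∧
    (∀ τ : ℕ, 2 ^ (m - 1) + 2 - (2 ^ π (m - 3) + 1) ≤ τ → τ ≤ 2 ^ (m - 1) + 1 →
      acorr (2 ^ (m - 1) + 2) a b τ + acorr (2 ^ (m - 1) + 2) b a τ = 0) := by
  obtain ⟨M, rfl⟩ : ∃ M, m = M + 4 := ⟨m - 4, by omega⟩
  have e1 : M + 4 - 1 = M + 3 := by omega
  have e2 : M + 4 - 2 = M + 2 := by omega
  have e3 : M + 4 - 3 = M + 1 := by omega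
  rw [e2] at hπ
  simp only [e1, e2, e3] at hg hG hG₁ hG₂ ha hb ⊢
  -- basic facts about π
  have hinj : ∀ r, r < M+2 → ∀ r', r' < M+2 → π r = π r' → r = r' := fun r hr r' hr' h =>
    hπ.injOn (Set.mem_Iio.mpr hr) (Set.mem_Iio.mpr hr') h
  have hmap : ∀ r, r < M+2 → π r < M+2 := fun r hr =>
    Set.mem_Iio.mp (hπ.mapsTo (Set.mem_Iio.mpr hr))
  have hsurj : ∀ t, t < M+2 → ∃ j, j < M+2 ∧ π j = t := by
    intro t ht
    obtain ⟨j, hj, hje⟩ := hπ.surjOn (Set.mem_Iio.mpr ht)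
    exact ⟨j, Set.mem_Iio.mp hj, hje⟩
  have hpM : π (M+1) < M+2 := hmap _ (by omega)
  have hP1 : 2^(π (M+1)) ≤ 2^(M+1) := Nat.pow_le_pow_right (by norm_num) (by omega)
  have hpow3 : (2:ℕ)^(M+3) = 2*2^(M+2) := by rw [pow_succ]; ring
  have hpow2 : (2:ℕ)^(M+2) = 2*2^(M+1) := by rw [pow_succ]; ring
  have hn1 : (1:ℕ) ≤ 2^(M+2) := Nat.one_le_two_pow
  have hPpos : (1:ℕ) ≤ 2^(π (M+1)) := Nat.one_le_two_pow
  -- omega facts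
  have hωne : omegaq q ≠ 0 := Complex.exp_ne_zero _
  have hconj : (starRingEnd ℂ) (omegaq q) = (omegaq q)⁻¹ := by
    rw [omegaq, ← Complex.exp_conj, ← Complex.exp_neg]
    congr 1
    rw [map_div₀, map_mul, map_mul, Complex.conj_I, map_ofNat, Complex.conj_ofReal, map_natCast]
    ring
  have hhalf : omegaq q ^ (q/2) = -1 := by
    rw [omegaq, ← Complex.exp_nat_mul]
    obtain ⟨t, rfl⟩ := hq2
    have ht0 : (t:ℂ) ≠ 0 := Nat.cast_ne_zero.mpr (by omega)
    rw [show (2*t/2 : ℕ) = t by omega]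
    rw [show (t:ℂ) * (2 * Real.pi * Complex.I / (2*t : ℕ)) = Real.pi * Complex.I by
      push_cast; field_simp]
    exact Complex.exp_pi_mul_I
  -- the exponent functions
  set F₁ : ℕ → ℕ := fun j => (1 - bit j (M+3)) * bit j (M+2) * g j
      + bit j (M+3) * (1 - bit j (M+2)) * (g j + bit j (π 0) + (M+2))
      + bit j (M+3) * bit j (M+2) with hF₁def
  set F₂ : ℕ → ℕ := fun j => (1 - bit j (M+3)) * bit j (M+2) * g j
      + bit j (M+3) * (1 - bit j (M+2)) * (g j + bit j (π 0) + (M+2))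
      + bit j (π (M+1)) * (bit j (M+3) + bit j (M+2)) with hF₂def
  have hG₁' : ∀ j, G₁ j = q/2 * F₁ j + c := by
    intro j; rw [hG₁ j, hG j, hF₁def]; ring
  have hG₂' : ∀ j, G₂ j = q/2 * F₂ j + c := by
    intro j; rw [hG₂ j, hG j, hF₂def]; ring
  have ha' : ∀ i, a i = (-1:ℂ)^(F₁ (i + (2^(M+2)-1))) * omegaq q ^ c := by
    intro i; rw [ha i, hG₁', pow_add, pow_mul, hhalf]
  have hb' : ∀ i, b i = (-1:ℂ)^(F₂ (i + (2^(M+2)-1))) * omegaq q ^ c := by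
    intro i; rw [hb i, hG₂', pow_add, pow_mul, hhalf]
  have hmc : ∀ x y : ℕ, ((-1:ℂ)^x * omegaq q ^c) * (starRingEnd ℂ) ((-1:ℂ)^y * omegaq q ^c)
      = (-1:ℂ)^(x+y) := by
    intro x y
    rw [map_mul, map_pow, map_pow, map_neg, map_one, hconj, pow_add]
    have hone : omegaq q ^ c * ((omegaq q)⁻¹)^c = 1 := by
      rw [← mul_pow, mul_inv_cancel₀ hωne, one_pow]
    calc ((-1:ℂ)^x * omegaq q ^c) * ((-1:ℂ)^y * ((omegaq q)⁻¹)^c)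
        = ((-1:ℂ)^x * (-1:ℂ)^y) * (omegaq q ^ c * ((omegaq q)⁻¹)^c) := by ring
      _ = (-1:ℂ)^x * (-1:ℂ)^y := by rw [hone, mul_one]
  -- bit transfer lemmas
  have hbtrn : ∀ k t, t < M+2 → bit (2^(M+2)+k) t = bit k t := fun k t ht => by
    simpa using bit_mul_add 1 k ht
  have hbtr2n : ∀ k t, t < M+3 → bit (2*2^(M+2)+k) t = bit k t := fun k t ht => by
    have h := bit_mul_add 1 k (s := M+3) ht
    rw [hpow3] at h
    simpa using h
  have hgn : ∀ k, g (2^(M+2)+k) = g k := by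
    intro k
    rw [hg, hg]
    refine Finset.sum_congr rfl fun r hr => ?_
    rw [Finset.mem_range] at hr
    rw [hbtrn k (π r) (hmap r (by omega)), hbtrn k (π (r+1)) (hmap (r+1) (by omega))]
  have hg2n : ∀ k, g (2*2^(M+2)+k) = g k := by
    intro k
    rw [hg, hg]
    refine Finset.sum_congr rfl fun r hr => ?_
    rw [Finset.mem_range] at hr
    rw [hbtr2n k (π r) (by have := hmap r (by omega); omega),
        hbtr2n k (π (r+1)) (by have := hmap (r+1) (by omega); omega)]
  -- bits of the various regions
  have hbn2 : ∀ k, k < 2^(M+2) → bit (2^(M+2)+k) (M+2) = 1 := fun k hk => by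
    have h := bit_parts_eq 0 1 k (M+2) le_rfl hk
    simpa using h
  have hbn3 : ∀ k, k < 2^(M+2) → bit (2^(M+2)+k) (M+3) = 0 := fun k hk =>
    bit_of_lt (by omega)
  have hb2n2 : ∀ k, k < 2^(M+2) → bit (2*2^(M+2)+k) (M+2) = 0 := fun k hk => by
    have h := bit_parts_eq 1 0 k (M+2) (by norm_num) hk
    rw [show (1:ℕ) * 2^(M+2+1) + 0 * 2^(M+2) + k = 2*2^(M+2)+k by
      rw [show M+2+1 = M+3 from rfl, hpow3]; ring] at h
    exact h
  have hb2n3 : ∀ k, k < 2^(M+2) → bit (2*2^(M+2)+k) (M+3) = 1 := fun k hk => by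
    have h := bit_parts_eq 0 1 k (M+3) le_rfl (by omega)
    rw [show (0:ℕ) * 2^(M+3+1) + 1 * 2^(M+3) + k = 2*2^(M+2)+k by rw [hpow3]; ring] at h
    exact h
  -- F-values
  have hF₁n : ∀ k, k < 2^(M+2) → F₁ (2^(M+2)+k) = g k := by
    intro k hk
    simp only [hF₁def]
    rw [hbn3 k hk, hbn2 k hk, hgn k]
    ring
  have hF₂n : ∀ k, k < 2^(M+2) → F₂ (2^(M+2)+k) = g k + bit k (π (M+1)) := by
    intro k hk
    simp only [hF₂def]
    rw [hbn3 k hk, hbn2 k hk, hgn k, hbtrn k (π (M+1)) hpM]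
    ring
  have hF₁2n : ∀ k, k < 2^(M+2) → F₁ (2*2^(M+2)+k) = g k + bit k (π 0) + (M+2) := by
    intro k hk
    simp only [hF₁def]
    rw [hb2n3 k hk, hb2n2 k hk, hg2n k, hbtr2n k (π 0) (by have := hmap 0 (by omega); omega)]
    ring
  have hF₂2n : ∀ k, k < 2^(M+2) → F₂ (2*2^(M+2)+k) = g k + bit k (π 0) + (M+2) + bit k (π (M+1)) := by
    intro k hk
    simp only [hF₂def]
    rw [hb2n3 k hk, hb2n2 k hk, hg2n k, hbtr2n k (π 0) (by have := hmap 0 (by omega); omega),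
        hbtr2n k (π (M+1)) (by omega)]
    ring
  have hF₁e : F₁ (2^(M+2)-1) = 0 := by
    simp only [hF₁def]
    rw [bit_of_lt (show 2^(M+2)-1 < 2^(M+2) by omega),
        bit_of_lt (show 2^(M+2)-1 < 2^(M+3) by omega)]
    ring
  have hF₂e : F₂ (2^(M+2)-1) = 0 := by
    simp only [hF₂def]
    rw [bit_of_lt (show 2^(M+2)-1 < 2^(M+2) by omega),
        bit_of_lt (show 2^(M+2)-1 < 2^(M+3) by omega)]
    ring
  have hb3n2 : bit (3*2^(M+2)) (M+2) = 1 := by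
    have h := bit_parts_eq 1 1 0 (M+2) le_rfl (by positivity)
    rw [show (1:ℕ) * 2^(M+2+1) + 1 * 2^(M+2) + 0 = 3*2^(M+2) by
      rw [show M+2+1 = M+3 from rfl, hpow3]; ring] at h
    exact h
  have hb3n3 : bit (3*2^(M+2)) (M+3) = 1 := by
    have h := bit_parts_eq 0 1 (2^(M+2)) (M+3) le_rfl (by omega)
    rw [show (0:ℕ) * 2^(M+3+1) + 1 * 2^(M+3) + 2^(M+2) = 3*2^(M+2) by rw [hpow3]; ring] at h
    exact h
  have hb3nlo : ∀ t, t < M+2 → bit (3*2^(M+2)) t = 0 := by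
    intro t ht
    have h := bit_mul_add 3 0 (s := M+2) ht
    rw [add_zero] at h
    rw [h, bit_zero]
  have hF₁f : F₁ (3*2^(M+2)) = 1 := by
    simp only [hF₁def]
    rw [hb3n3, hb3n2]
    ring
  have hF₂f : F₂ (3*2^(M+2)) = 0 := by
    simp only [hF₂def]
    rw [hb3n3, hb3n2, hb3nlo (π (M+1)) hpM]
    ring
  -- head and tail relations between a and b
  have hhead : ∀ i, i ≤ 2^(π (M+1)) → b i = a i := by
    intro i hi
    rw [ha' i, hb' i]
    rcases Nat.eq_zero_or_pos i with h0 | h0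
    · subst h0
      rw [show (0:ℕ) + (2^(M+2)-1) = 2^(M+2)-1 by omega, hF₁e, hF₂e]
    · obtain ⟨k, rfl⟩ : ∃ k, i = k + 1 := ⟨i - 1, by omega⟩
      rw [show k + 1 + (2^(M+2)-1) = 2^(M+2)+k by omega]
      have hk : k < 2^(M+2) := by omega
      rw [hF₁n k hk, hF₂n k hk, bit_of_lt (show k < 2^(π (M+1)) by omega), add_zero]
  have htail : ∀ i, 2^(M+3) + 2 ≤ i + (2^(π (M+1)) + 1) → i ≤ 2^(M+3)+1 → b i = -a i := by
    intro i hi1 hi2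
    rw [ha' i, hb' i]
    rcases Nat.lt_or_ge i (2^(M+3)+1) with h0 | h0
    · -- middle tail: i = n+1+k with k = i - n - 1 ∈ [n-2^p, n-1]
      obtain ⟨k, hk, rfl⟩ : ∃ k, k < 2^(M+2) ∧ i = 2^(M+2) + 1 + k :=
        ⟨i - 2^(M+2) - 1, by omega, by omega⟩
      rw [show 2^(M+2) + 1 + k + (2^(M+2)-1) = 2*2^(M+2)+k by omega]
      rw [hF₁2n k hk, hF₂2n k hk]
      have hw : bit k (π (M+1)) = 1 := by
        have hmir := bit_mirror (s := M+2) (k := 2^(M+2)-1-k) (by omega) hpM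
        rw [show 2^(M+2)-1-(2^(M+2)-1-k) = k by omega] at hmir
        rw [hmir, bit_of_lt (show 2^(M+2)-1-k < 2^(π (M+1)) by omega)]
      rw [hw, pow_succ]
      ring
    · -- last entry
      have : i = 2^(M+3)+1 := by omega
      subst this
      rw [show 2^(M+3) + 1 + (2^(M+2)-1) = 3*2^(M+2) by omega, hF₁f, hF₂f, pow_one, pow_zero]
      ring
  refine ⟨?_, ?_⟩
  · intro τ hτ
    rcases hτ with ⟨hτ1, hτ2⟩ | ⟨hτ1, hτ2⟩
    · -- ZONE 1
      have hτn : τ ≤ 2^(M+2) := by omega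
      set T : ℕ → ℂ := fun i => (-1:ℂ)^(F₁ (i + (2^(M+2)-1)) + F₁ (i + τ + (2^(M+2)-1)))
          + (-1:ℂ)^(F₂ (i + (2^(M+2)-1)) + F₂ (i + τ + (2^(M+2)-1))) with hT
      have hsum : acorr (2^(M+3)+2) a a τ + acorr (2^(M+3)+2) b b τ
          = ∑ i ∈ Finset.range (2^(M+3)+2-τ), T i := by
        unfold acorr
        rw [← Finset.sum_add_distrib]
        refine Finset.sum_congr rfl fun i _ => ?_
        rw [ha' i, ha' (i+τ), hb' i, hb' (i+τ), hmc, hmc, hT]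
      rw [hsum, show 2^(M+3)+2-τ = 1 + ((2^(M+2)-τ) + (τ + ((2^(M+2)-τ) + 1))) by omega,
          sum_range_add', sum_range_add', sum_range_add', Finset.sum_range_one,
          Finset.sum_range_succ]
      rw [show (1+((2^(M+2)-τ)+(τ+(2^(M+2)-τ)))) = 2*2^(M+2)+1-τ by omega]
      -- boundary pair
      have hB15 : T 0 + T (2*2^(M+2)+1-τ) = 0 := by
        simp only [hT]
        rw [show (0:ℕ) + (2^(M+2)-1) = 2^(M+2)-1 by omega,
            show (0:ℕ) + τ + (2^(M+2)-1) = 2^(M+2)+(τ-1) by omega,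
            show 2*2^(M+2)+1-τ + (2^(M+2)-1) = 2*2^(M+2)+(2^(M+2)-τ) by omega,
            show 2*2^(M+2)+1-τ + τ + (2^(M+2)-1) = 3*2^(M+2) by omega,
            hF₁e, hF₂e, hF₁f, hF₂f, hF₁n (τ-1) (by omega), hF₂n (τ-1) (by omega),
            hF₁2n (2^(M+2)-τ) (by omega), hF₂2n (2^(M+2)-τ) (by omega)]
        have hmg := gz_mirror' M π g hmap hg (τ-1) (by omega)
        rw [show 2^(M+2)-1-(τ-1) = 2^(M+2)-τ by omega] at hmg
        have hx0m := bit_mirror (s := M+2) (k := τ-1) (t := π 0) (by omega) (hmap 0 (by omega))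
        rw [show 2^(M+2)-1-(τ-1) = 2^(M+2)-τ by omega] at hx0m
        have hxb1 := bit_le_one (τ-1) (π 0)
        have hmirp := bit_mirror (s := M+2) (k := τ-1) (t := π (M+1)) (by omega) hpM
        rw [show 2^(M+2)-1-(τ-1) = 2^(M+2)-τ by omega] at hmirp
        by_cases hτP : τ ≤ 2^(π (M+1))
        · have hb1 : bit (τ-1) (π (M+1)) = 0 := bit_of_lt (by omega)
          have hb2 : bit (2^(M+2)-τ) (π (M+1)) = 1 := by rw [hmirp, hb1]
          have c1 : (-1:ℂ)^(0 + g (τ-1))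
              + (-1:ℂ)^(g (2^(M+2)-τ) + bit (2^(M+2)-τ) (π 0) + (M+2) + 1) = 0 :=
            npc_cancel (by omega)
          have c2 : (-1:ℂ)^(0 + (g (τ-1) + bit (τ-1) (π (M+1))))
              + (-1:ℂ)^(g (2^(M+2)-τ) + bit (2^(M+2)-τ) (π 0) + (M+2)
                  + bit (2^(M+2)-τ) (π (M+1)) + 0) = 0 :=
            npc_cancel (by omega)
          linear_combination c1 + c2
        · have hτP' : τ = 2^(π (M+1)) + 1 := by omega
          have hbP : bit (2^(π (M+1))) (π (M+1)) = 1 := by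
            rw [bit_two_pow, if_pos rfl]
          have hb1 : bit (τ-1) (π (M+1)) = 1 := by
            rw [show τ-1 = 2^(π (M+1)) by omega, hbP]
          have hb2 : bit (2^(M+2)-τ) (π (M+1)) = 0 := by rw [hmirp, hb1]
          have c1 : (-1:ℂ)^(0 + g (τ-1))
              + (-1:ℂ)^(0 + (g (τ-1) + bit (τ-1) (π (M+1)))) = 0 :=
            npc_cancel (by omega)
          have c2 : (-1:ℂ)^(g (2^(M+2)-τ) + bit (2^(M+2)-τ) (π 0) + (M+2) + 1)
              + (-1:ℂ)^(g (2^(M+2)-τ) + bit (2^(M+2)-τ) (π 0) + (M+2)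
                  + bit (2^(M+2)-τ) (π (M+1)) + 0) = 0 :=
            npc_cancel (by omega)
          linear_combination c1 + c2
      -- middle block B3
      have hg0 : g 0 = 0 := by rw [hg]; simp [bit_zero]
      have hTB3 : ∀ i, i < τ → T (1+((2^(M+2)-τ)+i))
          = (-1:ℂ)^(g (2^(M+2)-τ+i) + (g i + bit i (π 0) + (M+2)))
            + (-1:ℂ)^((g (2^(M+2)-τ+i) + bit (2^(M+2)-τ+i) (π (M+1)))
                + (g i + bit i (π 0) + (M+2) + bit i (π (M+1)))) := by
        intro i hi
        simp only [hT]
        rw [show 1+((2^(M+2)-τ)+i) + (2^(M+2)-1) = 2^(M+2)+(2^(M+2)-τ+i) by omega,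
            show 1+((2^(M+2)-τ)+i) + τ + (2^(M+2)-1) = 2*2^(M+2)+i by omega,
            hF₁n (2^(M+2)-τ+i) (by omega), hF₂n (2^(M+2)-τ+i) (by omega),
            hF₁2n i (by omega), hF₂2n i (by omega)]
      have hmirp1 : ∀ w, w < 2^(π (M+1)) → bit (2^(M+2)-1-w) (π (M+1)) = 1 := by
        intro w hw
        rw [bit_mirror (by omega) hpM, bit_of_lt (by omega)]
      have hB3 : ∑ i ∈ Finset.range τ, T (1+((2^(M+2)-τ)+i)) = 0 := by
        by_cases hτP : τ ≤ 2^(π (M+1))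
        · apply Finset.sum_eq_zero
          intro i hi
          rw [Finset.mem_range] at hi
          rw [hTB3 i hi]
          apply npc_cancel
          have h1 := hmirp1 (τ-1-i) (by omega)
          rw [show 2^(M+2)-1-(τ-1-i) = 2^(M+2)-τ+i by omega] at h1
          have h2 : bit i (π (M+1)) = 0 := bit_of_lt (by omega)
          omega
        · have hτP' : τ = 2^(π (M+1)) + 1 := by omega
          have hgP : g (2^(π (M+1))) = 0 := by
            rw [hg]
            refine Finset.sum_eq_zero fun r hr => ?_
            rw [Finset.mem_range] at hr
            have hne : π (M+1) ≠ π r := fun hc => by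
              have := hinj (M+1) (by omega) r (by omega) hc
              omega
            rw [bit_two_pow, if_neg hne, zero_mul]
          have hx0P : bit (2^(π (M+1))) (π 0) = 0 := by
            rw [bit_two_pow, if_neg (fun hc => by
              have := hinj (M+1) (by omega) 0 (by omega) hc; omega)]
          have hbPP : bit (2^(π (M+1))) (π (M+1)) = 1 := by rw [bit_two_pow, if_pos rfl]
          have hterm : ∀ i ∈ Finset.range τ, T (1+((2^(M+2)-τ)+i))
              = if i = 0 then (2:ℂ) else if i = τ-1 then -2 else 0 := by
            intro i hi
            rw [Finset.mem_range] at hi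
            rw [hTB3 i hi]
            by_cases hi0 : i = 0
            · subst hi0
              rw [if_pos rfl]
              rw [show 2^(M+2)-τ+0 = 2^(M+2)-τ by omega, hg0, bit_zero, bit_zero]
              have hmgP := gz_mirror' M π g hmap hg (2^(π (M+1))) (by omega)
              rw [show 2^(M+2)-1-2^(π (M+1)) = 2^(M+2)-τ by omega] at hmgP
              have hbp0 := bit_mirror (s := M+2) (k := 2^(π (M+1))) (t := π (M+1))
                (by omega) hpM
              rw [show 2^(M+2)-1-2^(π (M+1)) = 2^(M+2)-τ by omega] at hbp0
              rw [npc_zero (by omega), npc_zero (by omega)]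
              norm_num
            · by_cases hiτ : i = τ-1
              · rw [if_neg hi0, if_pos hiτ, hiτ,
                    show 2^(M+2)-τ+(τ-1) = 2^(M+2)-1 by omega,
                    show τ-1 = 2^(π (M+1)) by omega]
                have hmg0 := gz_mirror' M π g hmap hg 0 (by omega)
                rw [show 2^(M+2)-1-0 = 2^(M+2)-1 by omega, hg0, bit_zero, bit_zero] at hmg0
                have hbpn1 := hmirp1 0 (by omega)
                rw [show 2^(M+2)-1-0 = 2^(M+2)-1 by omega] at hbpn1
                rw [hgP, hx0P, hbPP, hbpn1]
                rw [npc_one (by omega), npc_one (by omega)]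
                norm_num
              · rw [if_neg hi0, if_neg hiτ]
                apply npc_cancel
                have h1 := hmirp1 (τ-1-i) (by omega)
                rw [show 2^(M+2)-1-(τ-1-i) = 2^(M+2)-τ+i by omega] at h1
                have h2 : bit i (π (M+1)) = 0 := bit_of_lt (by omega)
                omega
          rw [Finset.sum_congr rfl hterm,
              Finset.sum_congr rfl (fun i hi => by
                rw [Finset.mem_range] at hi
                by_cases h0 : i = 0
                · simp [h0, show ¬((0:ℕ) = τ-1) by omega]
                · by_cases h1 : i = τ-1
                  · subst h1; simp [h0]
                  · simp [h0, h1] :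
                ∀ i ∈ Finset.range τ, (if i = 0 then (2:ℂ) else if i = τ-1 then -2 else 0)
                  = (if i = 0 then (2:ℂ) else 0) + (if i = τ-1 then (-2:ℂ) else 0)),
              Finset.sum_add_distrib,
              Finset.sum_ite_eq' (Finset.range τ) 0 (fun _ => (2:ℂ)),
              Finset.sum_ite_eq' (Finset.range τ) (τ-1) (fun _ => (-2:ℂ)),
              if_pos (Finset.mem_range.mpr (by omega)),
              if_pos (Finset.mem_range.mpr (by omega))]
          norm_num
      -- main block B2 + B4
      have hfval : ∀ i, i < 2^(M+2)-τ → T (1+i) + T (1+((2^(M+2)-τ)+(τ+i)))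
          = ((-1:ℂ)^(g i + g (i+τ))
              + (-1:ℂ)^((g i + bit i (π (M+1))) + (g (i+τ) + bit (i+τ) (π (M+1)))))
            + ((-1:ℂ)^((g i + bit i (π 0) + (M+2)) + (g (i+τ) + bit (i+τ) (π 0) + (M+2)))
              + (-1:ℂ)^((g i + bit i (π 0) + (M+2) + bit i (π (M+1)))
                  + (g (i+τ) + bit (i+τ) (π 0) + (M+2) + bit (i+τ) (π (M+1))))) := by
        intro i hi
        simp only [hT]
        rw [show 1+i + (2^(M+2)-1) = 2^(M+2)+i by omega,
            show 1+i + τ + (2^(M+2)-1) = 2^(M+2)+(i+τ) by omega,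
            show 1+((2^(M+2)-τ)+(τ+i)) + (2^(M+2)-1) = 2*2^(M+2)+i by omega,
            show 1+((2^(M+2)-τ)+(τ+i)) + τ + (2^(M+2)-1) = 2*2^(M+2)+(i+τ) by omega,
            hF₁n i (by omega), hF₂n i (by omega), hF₁n (i+τ) (by omega), hF₂n (i+τ) (by omega),
            hF₁2n i (by omega), hF₂2n i (by omega), hF₁2n (i+τ) (by omega),
            hF₂2n (i+τ) (by omega)]
      have hB24 : (∑ i ∈ Finset.range (2^(M+2)-τ), T (1+i))
          + ∑ i ∈ Finset.range (2^(M+2)-τ), T (1+((2^(M+2)-τ)+(τ+i))) = 0 := by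
        rw [← Finset.sum_add_distrib]
        classical
        have hex : ∀ i, i < 2^(M+2)-τ →
            ∃ j, j < M+2 ∧ bit i (π j) ≠ bit (i+τ) (π j) := by
          intro i hi
          obtain ⟨t, ht, hne⟩ := exists_bit_ne (s := M+2) (k := i) (ℓ := i+τ)
            (by omega) (by omega) (by omega)
          obtain ⟨j, hj, hje⟩ := hsurj t ht
          exact ⟨j, hj, by rw [hje]; exact hne⟩
        set ι : ℕ → ℕ := fun i =>
          if h : (i < 2^(M+2)-τ ∧ bit i (π (M+1)) = bit (i+τ) (π (M+1))
              ∧ bit i (π 0) = bit (i+τ) (π 0))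
          then flipb (π (Nat.find (hex i h.1) - 1)) i else i with hι
        have hstep : ∀ i (hi : i < 2^(M+2)-τ),
            bit i (π (M+1)) = bit (i+τ) (π (M+1)) → bit i (π 0) = bit (i+τ) (π 0) →
            ι i < 2^(M+2)-τ ∧ ι i ≠ i ∧ ι (ι i) = i ∧
            (g (ι i) + g (ι i + τ) + g i + g (i+τ)) % 2 = 1 ∧
            (bit (ι i) (π (M+1)) + bit (ι i + τ) (π (M+1))) % 2
                = (bit i (π (M+1)) + bit (i+τ) (π (M+1))) % 2 ∧
            (bit (ι i) (π 0) + bit (ι i + τ) (π 0)) % 2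
                = (bit i (π 0) + bit (i+τ) (π 0)) % 2 := by
          intro i hi h1 h2
          have hcond : (i < 2^(M+2)-τ ∧ bit i (π (M+1)) = bit (i+τ) (π (M+1))
              ∧ bit i (π 0) = bit (i+τ) (π 0)) := ⟨hi, h1, h2⟩
          have hιi : ι i = flipb (π (Nat.find (hex i hcond.1) - 1)) i := by
            simp only [hι]
            rw [dif_pos hcond]
          have hspec := Nat.find_spec (hex i hcond.1)
          have hApos : Nat.find (hex i hcond.1) ≠ 0 := by
            intro h0
            have h0' := hspec
            rw [h0] at h0'
            exact h0'.2 h2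
          have hmin : ∀ j, j < Nat.find (hex i hcond.1) → j < M+2 →
              bit i (π j) = bit (i+τ) (π j) := by
            intro j hj hjM
            by_contra hne
            exact (Nat.find_min (hex i hcond.1) hj) ⟨hjM, hne⟩
          obtain ⟨A', hA'⟩ : ∃ A', Nat.find (hex i hcond.1) = A' + 1 :=
            ⟨Nat.find (hex i hcond.1) - 1, by omega⟩
          rw [hA'] at hιi hspec hmin
          rw [show A'+1-1 = A' by omega] at hιi
          have hβM : π A' < M+2 := hmap A' (by omega)
          have hbitβ : bit i (π A') = bit (i+τ) (π A') := hmin A' (by omega) (by omega)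
          have hℓ' : flipb (π A') (i+τ) = flipb (π A') i + τ := flipb_add rfl hbitβ
          have hilt : flipb (π A') i + τ < 2^(M+2) := by
            rw [← hℓ']
            exact flipb_lt (by omega) hβM
          have hgpar : (g (flipb (π A') i) + g (flipb (π A') (i+τ)) + g i + g (i+τ)) % 2 = 1 :=
            gz_flip M π g hinj hg i (i+τ) A' (by omega) hspec.2
              (fun j hj => hmin j (by omega) (by omega))
          have hflipeq : ∀ s : ℕ,
              (bit (flipb (π A') i) s = bit (flipb (π A') (i+τ)) s ↔ bit i s = bit (i+τ) s)
              ∧ (bit (flipb (π A') i) s + bit (flipb (π A') (i+τ)) s) % 2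
                  = (bit i s + bit (i+τ) s) % 2 := by
            intro s
            by_cases hs : s = π A'
            · subst hs
              rw [flipb_bit_self, flipb_bit_self]
              have hbb1 := bit_le_one i (π A')
              have hbb2 := bit_le_one (i+τ) (π A')
              constructor
              · constructor <;> intro h <;> omega
              · omega
            · rw [flipb_bit_ne _ hs, flipb_bit_ne _ hs]
              exact ⟨Iff.rfl, rfl⟩
          have hp' : bit (flipb (π A') i) (π (M+1)) = bit (flipb (π A') i + τ) (π (M+1)) := by
            rw [← hℓ']
            exact (hflipeq (π (M+1))).1.mpr h1
          have hx0' : bit (flipb (π A') i) (π 0) = bit (flipb (π A') i + τ) (π 0) := by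
            rw [← hℓ']
            exact (hflipeq (π 0)).1.mpr h2
          have hne : flipb (π A') i ≠ i := by
            intro he
            have h5 := flipb_bit_self (π A') i
            rw [he] at h5
            have := bit_le_one i (π A')
            omega
          have hcond' : (flipb (π A') i < 2^(M+2)-τ
              ∧ bit (flipb (π A') i) (π (M+1)) = bit (flipb (π A') i + τ) (π (M+1))
              ∧ bit (flipb (π A') i) (π 0) = bit (flipb (π A') i + τ) (π 0)) :=
            ⟨by omega, hp', hx0'⟩
          have hfind' : Nat.find (hex (flipb (π A') i) hcond'.1) = A' + 1 := by
            rw [← hA']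
            apply find_eq
            intro j
            have hiff : ∀ (hjM : j < M+2),
                (bit (flipb (π A') i) (π j) ≠ bit (flipb (π A') i + τ) (π j)
                  ↔ bit i (π j) ≠ bit (i+τ) (π j)) := by
              intro hjM
              rw [← hℓ']
              exact not_iff_not.mpr (hflipeq (π j)).1
            constructor
            · rintro ⟨hjM, hne2⟩
              exact ⟨hjM, (hiff hjM).mp hne2⟩
            · rintro ⟨hjM, hne2⟩
              exact ⟨hjM, (hiff hjM).mpr hne2⟩
          have hιι : ι (flipb (π A') i) = i := by
            simp only [hι]
            rw [dif_pos hcond', hfind', show A'+1-1 = A' by omega, flipb_flipb]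
          rw [hιi]
          refine ⟨by omega, hne, hιι, ?_, ?_, ?_⟩
          · rw [← hℓ']
            exact hgpar
          · rw [← hℓ']
            exact (hflipeq (π (M+1))).2
          · rw [← hℓ']
            exact (hflipeq (π 0)).2
        have hneg : ∀ i, i < 2^(M+2)-τ →
            ¬(i < 2^(M+2)-τ ∧ bit i (π (M+1)) = bit (i+τ) (π (M+1))
              ∧ bit i (π 0) = bit (i+τ) (π 0)) →
            T (1+i) + T (1+((2^(M+2)-τ)+(τ+i))) = 0 := by
          intro i hi hc
          rw [hfval i hi]
          have hd : bit i (π (M+1)) ≠ bit (i+τ) (π (M+1))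
              ∨ bit i (π 0) ≠ bit (i+τ) (π 0) := by tauto
          have hb1 := bit_le_one i (π (M+1))
          have hb2 := bit_le_one (i+τ) (π (M+1))
          have hb3 := bit_le_one i (π 0)
          have hb4 := bit_le_one (i+τ) (π 0)
          rcases hd with hd | hd
          · have c12 : (-1:ℂ)^(g i + g (i+τ))
                + (-1:ℂ)^((g i + bit i (π (M+1))) + (g (i+τ) + bit (i+τ) (π (M+1)))) = 0 :=
              npc_cancel (by omega)
            have c34 : (-1:ℂ)^((g i + bit i (π 0) + (M+2)) + (g (i+τ) + bit (i+τ) (π 0) + (M+2)))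
                + (-1:ℂ)^((g i + bit i (π 0) + (M+2) + bit i (π (M+1)))
                    + (g (i+τ) + bit (i+τ) (π 0) + (M+2) + bit (i+τ) (π (M+1)))) = 0 :=
              npc_cancel (by omega)
            linear_combination c12 + c34
          · have c13 : (-1:ℂ)^(g i + g (i+τ))
                + (-1:ℂ)^((g i + bit i (π 0) + (M+2)) + (g (i+τ) + bit (i+τ) (π 0) + (M+2))) = 0 :=
              npc_cancel (by omega)
            have c24 : (-1:ℂ)^((g i + bit i (π (M+1))) + (g (i+τ) + bit (i+τ) (π (M+1))))
                + (-1:ℂ)^((g i + bit i (π 0) + (M+2) + bit i (π (M+1)))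
                    + (g (i+τ) + bit (i+τ) (π 0) + (M+2) + bit (i+τ) (π (M+1)))) = 0 :=
              npc_cancel (by omega)
            linear_combination c13 + c24
        have g_mem : ∀ a, a ∈ Finset.range (2^(M+2)-τ) → ι a ∈ Finset.range (2^(M+2)-τ) := by
          intro a ha
          rw [Finset.mem_range] at ha ⊢
          by_cases hc : (a < 2^(M+2)-τ ∧ bit a (π (M+1)) = bit (a+τ) (π (M+1))
              ∧ bit a (π 0) = bit (a+τ) (π 0))
          · exact (hstep a ha hc.2.1 hc.2.2).1
          · simp only [hι]
            rw [dif_neg hc]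
            exact ha
        refine Finset.sum_involution (fun i _ => ι i) ?_ ?_ (fun a ha => g_mem a ha) ?_
        · intro a ha
          rw [Finset.mem_range] at ha
          by_cases hc : (a < 2^(M+2)-τ ∧ bit a (π (M+1)) = bit (a+τ) (π (M+1))
              ∧ bit a (π 0) = bit (a+τ) (π 0))
          · obtain ⟨hlt', hne', hιι', hg', hrp', hr0'⟩ := hstep a ha hc.2.1 hc.2.2
            rw [hfval a ha, hfval (ι a) hlt']
            have hb1 := bit_le_one a (π (M+1))
            have hb2 := bit_le_one (a+τ) (π (M+1))
            have hb3 := bit_le_one a (π 0)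
            have hb4 := bit_le_one (a+τ) (π 0)
            have c1 : (-1:ℂ)^(g a + g (a+τ)) + (-1:ℂ)^(g (ι a) + g (ι a+τ)) = 0 :=
              npc_cancel (by omega)
            have c2 : (-1:ℂ)^((g a + bit a (π (M+1))) + (g (a+τ) + bit (a+τ) (π (M+1))))
                + (-1:ℂ)^((g (ι a) + bit (ι a) (π (M+1))) + (g (ι a+τ) + bit (ι a+τ) (π (M+1)))) = 0 :=
              npc_cancel (by omega)
            have c3 : (-1:ℂ)^((g a + bit a (π 0) + (M+2)) + (g (a+τ) + bit (a+τ) (π 0) + (M+2)))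
                + (-1:ℂ)^((g (ι a) + bit (ι a) (π 0) + (M+2)) + (g (ι a+τ) + bit (ι a+τ) (π 0) + (M+2))) = 0 :=
              npc_cancel (by omega)
            have c4 : (-1:ℂ)^((g a + bit a (π 0) + (M+2) + bit a (π (M+1)))
                  + (g (a+τ) + bit (a+τ) (π 0) + (M+2) + bit (a+τ) (π (M+1))))
                + (-1:ℂ)^((g (ι a) + bit (ι a) (π 0) + (M+2) + bit (ι a) (π (M+1)))
                  + (g (ι a+τ) + bit (ι a+τ) (π 0) + (M+2) + bit (ι a+τ) (π (M+1)))) = 0 :=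
              npc_cancel (by omega)
            linear_combination c1 + c2 + c3 + c4
          · have hca : ι a = a := by
              rw [hι]; simp only []; rw [dif_neg hc]
            rw [hca, hneg a ha hc]
            norm_num
        · intro a ha h0
          rw [Finset.mem_range] at ha
          by_cases hc : (a < 2^(M+2)-τ ∧ bit a (π (M+1)) = bit (a+τ) (π (M+1))
              ∧ bit a (π 0) = bit (a+τ) (π 0))
          · exact (hstep a ha hc.2.1 hc.2.2).2.1
          · exact absurd (hneg a ha hc) h0
        · intro a ha
          rw [Finset.mem_range] at ha
          by_cases hc : (a < 2^(M+2)-τ ∧ bit a (π (M+1)) = bit (a+τ) (π (M+1))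
              ∧ bit a (π 0) = bit (a+τ) (π 0))
          · exact (hstep a ha hc.2.1 hc.2.2).2.2.1
          · have hca : ι a = a := by
              simp only [hι]; rw [dif_neg hc]
            rw [hca, hca]
      linear_combination hB15 + hB3 + hB24
    · -- ZONE 2
      unfold acorr
      rw [← Finset.sum_add_distrib]
      apply Finset.sum_eq_zero
      intro i hi
      rw [Finset.mem_range] at hi
      rw [hhead i (by omega), htail (i+τ) (by omega) (by omega)]
      rw [map_neg]
      ring
  · intro τ hτ1 hτ2
    unfold acorr
    rw [← Finset.sum_add_distrib]
    apply Finset.sum_eq_zero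
    intro i hi
    rw [Finset.mem_range] at hi
    rw [hhead i (by omega), htail (i+τ) (by omega) (by omega)]
    rw [map_neg]
    ring
end
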